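/- Let d ≥ 1 be an integer and α ∈ ℝ. The function c_{d,α} is bounded on [0, ∞) if and only if α = 1 when d is even, respectively α = π/2 when d is odd. -/

import Mathlib

open scoped Nat

/-- The function `c_{d,α}` of the paper: the candidate (rescaled radial profile of the)
Weyl symbol of the inverse of the harmonic oscillator, depending on a parameter `α`. -/
noncomputable def cda (d : ℕ) (α : ℝ) (t : ℝ) : ℝ :=
  ((d‼ : ℝ) / d) *
    (α * (∑' p : ℕ, t ^ (2*p) / (((2*p)‼ * (2*p + d - 1)‼ : ℕ) : ℝ)) -
      ∑' p : ℕ, t ^ (2*p+1) / (((2*p+1)‼ * (2*p + d)‼ : ℕ) : ℝ))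

namespace Stmt7Aux

open Real MeasureTheory

/-- The moments `∫_0^{π/2} sin^n θ cos^{d-1} θ dθ`. -/
noncomputable def J (d n : ℕ) : ℝ := ∫ θ in (0:ℝ)..(π/2), sin θ ^ n * cos θ ^ (d - 1)

lemma J_nonneg (d n : ℕ) : 0 ≤ J d n := by
  apply intervalIntegral.integral_nonneg (by positivity)
  intro u hu
  have h1 : 0 ≤ sin u := sin_nonneg_of_nonneg_of_le_pi hu.1 (le_trans hu.2 (by linarith [pi_pos]))
  have h2 : 0 ≤ cos u := cos_nonneg_of_mem_Icc ⟨by linarith [hu.1, pi_pos], hu.2⟩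
  positivity

lemma J_le (d n : ℕ) : |J d n| ≤ π / 2 := by
  have := intervalIntegral.norm_integral_le_of_norm_le_const (C := 1)
    (f := fun θ : ℝ => sin θ ^ n * cos θ ^ (d-1)) (a := 0) (b := π/2) ?_
  · simpa [J, abs_of_nonneg pi_div_two_pos.le] using this
  · intro x hx
    have h1 : |sin x| ≤ 1 := abs_sin_le_one x
    have h2 : |cos x| ≤ 1 := abs_cos_le_one x
    rw [Real.norm_eq_abs, abs_mul, abs_pow, abs_pow]
    calc |sin x| ^ n * |cos x| ^ (d-1) ≤ 1 ^ n * 1 ^ (d-1) := by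
          exact mul_le_mul (pow_le_pow_left₀ (abs_nonneg _) h1 n)
            (pow_le_pow_left₀ (abs_nonneg _) h2 (d-1)) (by positivity) (by positivity)
      _ = 1 := by simp

lemma J_one {d : ℕ} (hd : 1 ≤ d) : J d 1 * d = 1 := by
  have key : J d 1 = 1 / d := by
    have hderiv : ∀ x ∈ Set.uIcc (0:ℝ) (π/2),
        HasDerivAt (fun θ : ℝ => -(cos θ ^ d) / d) (sin x ^ 1 * cos x ^ (d-1)) x := by
      intro x _
      have h : HasDerivAt (fun θ : ℝ => -(cos θ ^ d) / d)
          (-((d:ℝ) * cos x ^ (d-1) * (-sin x)) / d) x := by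
        exact (((Real.hasDerivAt_cos x).pow d).neg).div_const d
      convert h using 1
      have hd0 : (d:ℝ) ≠ 0 := by positivity
      field_simp
    have := intervalIntegral.integral_eq_sub_of_hasDerivAt hderiv
      ((by fun_prop : Continuous fun θ : ℝ => sin θ ^ 1 * cos θ ^ (d-1)).intervalIntegrable 0 (π/2))
    rw [J, this, Real.cos_pi_div_two, Real.cos_zero, zero_pow (by omega), one_pow]
    ring
  rw [key]
  field_simp

lemma J_rec {d : ℕ} (hd : 1 ≤ d) (n : ℕ) :
    ((n:ℝ)+1) * J d n = ((n:ℝ)+(d:ℝ)+1) * J d (n+2) := by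
  have hderiv : ∀ x ∈ Set.uIcc (0:ℝ) (π/2),
      HasDerivAt (fun θ : ℝ => sin θ ^ (n+1) * cos θ ^ d)
        (((n:ℝ)+1) * (sin x ^ n * cos x ^ (d-1))
          - ((n:ℝ)+(d:ℝ)+1) * (sin x ^ (n+2) * cos x ^ (d-1))) x := by
    intro x _
    have h := ((Real.hasDerivAt_sin x).pow (n+1)).mul ((Real.hasDerivAt_cos x).pow d)
    refine h.congr_deriv (Eq.symm ?_)
    have hsc := Real.sin_sq_add_cos_sq x
    have hdd : d = (d-1)+1 := by omega
    rw [hdd]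
    simp only [Pi.pow_apply, Nat.add_sub_cancel, Nat.cast_add, Nat.cast_one]
    linear_combination (-(((n:ℝ)+1) * sin x ^ n * cos x ^ (d-1))) * hsc
  have hint : IntervalIntegrable (fun x : ℝ => ((n:ℝ)+1) * (sin x ^ n * cos x ^ (d-1))
      - ((n:ℝ)+(d:ℝ)+1) * (sin x ^ (n+2) * cos x ^ (d-1))) volume 0 (π/2) := by
    apply Continuous.intervalIntegrable; fun_prop
  have key := intervalIntegral.integral_eq_sub_of_hasDerivAt hderiv hint
  rw [Real.sin_pi_div_two, Real.cos_pi_div_two, Real.sin_zero, zero_pow (by omega),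
    zero_pow (by omega), one_pow] at key
  rw [intervalIntegral.integral_sub ((Continuous.intervalIntegrable (by fun_prop) _ _))
      ((Continuous.intervalIntegrable (by fun_prop) _ _)),
    intervalIntegral.integral_const_mul, intervalIntegral.integral_const_mul] at key
  have : ((n:ℝ)+1) * J d n - ((n:ℝ)+(d:ℝ)+1) * J d (n+2) = 0 := by
    rw [J, J]; linarith [key]
  linarith [this]

lemma J_even {d : ℕ} (hd : 1 ≤ d) : ∀ p : ℕ,
    J d (2*p) * (((2*p + d - 1)‼ : ℕ) : ℝ) = (((2*p - 1)‼ : ℕ) : ℝ) * (((d-1)‼ : ℕ) : ℝ) * J d 0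
  | 0 => by simp; ring
  | (p+1) => by
    have IH := J_even hd p
    have hrec := J_rec hd (2*p)
    have h1 : 2*(p+1) + d - 1 = (2*p + d - 1) + 2 := by omega
    have h2 : 2*(p+1) - 1 = 2*p + 1 := by omega
    have h3 : 2*(p+1) = 2*p + 2 := by omega
    have h4 : (2*p + d - 1) + 2 = 2*p + d + 1 := by omega
    rw [h1, h2, h3, Nat.doubleFactorial_add_two, Nat.doubleFactorial_add_one, h4]
    push_cast at hrec IH ⊢
    linear_combination (-((((2*p+d-1)‼ : ℕ):ℝ))) * hrec + (2*(p:ℝ)+1) * IH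

lemma J_odd {d : ℕ} (hd : 1 ≤ d) : ∀ p : ℕ,
    J d (2*p+1) * (((2*p + d)‼ : ℕ) : ℝ) * d = (((2*p)‼ : ℕ) : ℝ) * ((d‼ : ℕ) : ℝ)
  | 0 => by
    have h := J_one hd
    simp only [Nat.mul_zero, Nat.zero_add, Nat.doubleFactorial]
    push_cast
    nlinarith [h]
  | (p+1) => by
    have IH := J_odd hd p
    have hrec := J_rec hd (2*p+1)
    have h1 : 2*(p+1) + d = (2*p + d) + 2 := by omega
    have h3 : 2*(p+1) + 1 = (2*p+1) + 2 := by omega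
    have h4 : 2*(p+1) = 2*p + 2 := by omega
    rw [h1, h3, h4, Nat.doubleFactorial_add_two, Nat.doubleFactorial_add_two]
    push_cast at hrec IH ⊢
    linear_combination (-((((2*p+d)‼ : ℕ):ℝ)) * (d:ℝ)) * hrec + (2*(p:ℝ)+2) * IH

lemma J_one_n (m : ℕ) : J 1 m = ∫ θ in (0:ℝ)..(π/2), sin θ ^ m := by
  unfold J; norm_num

lemma J_symm {d : ℕ} (hd : 1 ≤ d) : J d 0 = J 1 (d-1) := by
  rw [J_one_n, J]
  simp only [pow_zero, one_mul]
  have := intervalIntegral.integral_comp_sub_left (a := (0:ℝ)) (b := π/2)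
    (fun y : ℝ => sin y ^ (d-1)) (π/2)
  simp only [sub_zero, sub_self, Real.sin_pi_div_two_sub] at this
  rw [← this]

lemma J_ten : J 1 0 = π / 2 := by
  rw [J_one_n]; simp

lemma J_zero {d : ℕ} (hd : 1 ≤ d) :
    J d 0 * (((d-1)‼ : ℕ) : ℝ) * d = (if Even d then (1:ℝ) else π/2) * ((d‼ : ℕ) : ℝ) := by
  rcases Nat.even_or_odd (d-1) with ⟨p, hp⟩ | ⟨p, hp⟩
  · have hdodd : d = 2*p+1 := by omega
    have hev : ¬ Even d := by rw [hdodd]; simp [Nat.even_add_one, parity_simps]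
    have h := J_even (le_refl 1) p
    simp only [Nat.sub_self, Nat.doubleFactorial] at h
    have h0 : (2*p + 1 - 1) = 2*p := by omega
    rw [h0, J_ten] at h
    rw [if_neg hev, J_symm hd]
    have h1 : d - 1 = 2*p := by omega
    rw [h1, hdodd]
    have h2 : (2*p+1)‼ = (2*p+1) * (2*p-1)‼ := Nat.doubleFactorial_add_one (2*p)
    rw [h2]
    push_cast at h ⊢
    nlinarith [h]
  · have hdev : d = 2*p+2 := by omega
    have hev : Even d := by rw [hdev]; exact ⟨p+1, by ring⟩
    have h := J_odd (le_refl 1) p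
    simp only [Nat.cast_one, mul_one] at h
    rw [if_pos hev, J_symm hd]
    have h1 : d - 1 = 2*p+1 := by omega
    rw [h1, hdev]
    have h2 : (2*p+2)‼ = (2*p+2) * (2*p)‼ := Nat.doubleFactorial_add_two (2*p)
    rw [h2]
    have h3 : (1:ℕ)‼ = 1 := rfl
    rw [h3] at h
    push_cast at h ⊢
    nlinarith [h]

lemma J_pos {d : ℕ} (hd : 1 ≤ d) : 0 < J d 0 := by
  have h := J_zero hd
  have h1 : (0:ℝ) < (if Even d then (1:ℝ) else π/2) * ((d‼ : ℕ) : ℝ) := by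
    apply mul_pos
    · split
      · norm_num
      · positivity
    · exact_mod_cast Nat.doubleFactorial_pos d
  rw [← h] at h1
  have c1 : (0:ℝ) < (((d-1)‼ : ℕ) : ℝ) := by exact_mod_cast Nat.doubleFactorial_pos (d-1)
  have c2 : (0:ℝ) < (d:ℝ) := by exact_mod_cast hd
  nlinarith [h1, c1, c2, mul_pos c1 c2]

lemma exp_tsum (x : ℝ) : Real.exp x = ∑' n : ℕ, x ^ n / n ! := by
  rw [Real.exp_eq_exp_ℝ, NormedSpace.exp_eq_tsum_div]

lemma J_summable (d : ℕ) (t : ℝ) : Summable (fun n : ℕ => t ^ n / n ! * J d n) := by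
  apply Summable.of_norm_bounded (g := fun n : ℕ => |t| ^ n / n ! * (π/2))
  · exact (Real.summable_pow_div_factorial |t|).mul_right _
  · intro n
    rw [Real.norm_eq_abs, abs_mul, abs_div, abs_pow, Nat.abs_cast]
    exact mul_le_mul_of_nonneg_left (J_le d n) (by positivity)

lemma Et_eq {d : ℕ} (hd : 1 ≤ d) (t : ℝ) :
    (∫ θ in (0:ℝ)..(π/2), exp (t * sin θ) * cos θ ^ (d-1)) = ∑' n : ℕ, t ^ n / n ! * J d n := by
  have hπ : (0:ℝ) ≤ π/2 := by positivity
  set F : ℕ → ℝ → ℝ := fun i θ => (t ^ i / i !) * (sin θ ^ i * cos θ ^ (d-1)) with hF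
  have hFc : ∀ i, Continuous (F i) := by intro i; simp only [hF]; fun_prop
  have hFint : ∀ i, IntegrableOn (F i) (Set.Ioc (0:ℝ) (π/2)) volume := by
    intro i
    exact (hFc i).integrableOn_Ioc
  have hbound : ∀ i : ℕ, ∀ θ ∈ Set.Ioc (0:ℝ) (π/2), ‖F i θ‖ ≤ |t| ^ i / i ! := by
    intro i θ hθ
    simp only [hF, Real.norm_eq_abs, abs_mul, abs_div, abs_pow, Nat.abs_cast]
    have h1 : |sin θ| ≤ 1 := abs_sin_le_one θ
    have h2 : |cos θ| ≤ 1 := abs_cos_le_one θ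
    have hb : |sin θ| ^ i * |cos θ| ^ (d-1) ≤ 1 := by
      calc |sin θ| ^ i * |cos θ| ^ (d-1) ≤ 1 ^ i * 1 ^ (d-1) :=
            mul_le_mul (pow_le_pow_left₀ (abs_nonneg _) h1 i)
              (pow_le_pow_left₀ (abs_nonneg _) h2 (d-1)) (by positivity) (by positivity)
        _ = 1 := by simp
    calc |t| ^ i / i ! * (|sin θ| ^ i * |cos θ| ^ (d-1)) ≤ |t| ^ i / i ! * 1 :=
          mul_le_mul_of_nonneg_left hb (by positivity)
      _ = |t| ^ i / i ! := by simp
  have hnorm : ∀ i : ℕ, (∫ θ in Set.Ioc (0:ℝ) (π/2), ‖F i θ‖) ≤ (π/2) * (|t| ^ i / i !) := by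
    intro i
    have : (∫ θ in Set.Ioc (0:ℝ) (π/2), ‖F i θ‖)
        ≤ ∫ _ in Set.Ioc (0:ℝ) (π/2), (|t| ^ i / i !) := by
      apply setIntegral_mono_on (hFint i).norm
        (integrableOn_const (by simp [measure_lt_top])) measurableSet_Ioc
      exact hbound i
    simpa [Real.volume_Ioc, hπ, ENNReal.toReal_ofReal, mul_comm] using this
  have hsum : Summable fun i : ℕ => ∫ θ in Set.Ioc (0:ℝ) (π/2), ‖F i θ‖ := by
    apply Summable.of_nonneg_of_le (fun i => integral_nonneg (fun θ => norm_nonneg _)) hnorm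
    exact (Real.summable_pow_div_factorial |t|).mul_left _
  have key := MeasureTheory.integral_tsum_of_summable_integral_norm
    (μ := volume.restrict (Set.Ioc (0:ℝ) (π/2))) (fun i => hFint i) hsum
  rw [intervalIntegral.integral_of_le hπ]
  have hpt : ∀ θ : ℝ, (∑' i : ℕ, F i θ) = exp (t * sin θ) * cos θ ^ (d-1) := by
    intro θ
    rw [exp_tsum, ← tsum_mul_right]
    congr 1; ext i
    simp only [hF]
    rw [mul_pow]
    ring
  calc (∫ θ in Set.Ioc (0:ℝ) (π/2), exp (t * sin θ) * cos θ ^ (d-1))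
      = ∫ θ in Set.Ioc (0:ℝ) (π/2), (∑' i, F i θ) := by
        apply setIntegral_congr_fun measurableSet_Ioc
        intro θ _; exact (hpt θ).symm
    _ = ∑' i, ∫ θ in Set.Ioc (0:ℝ) (π/2), F i θ := key.symm
    _ = ∑' i, t ^ i / i ! * J d i := by
        congr 1; ext i
        rw [J, intervalIntegral.integral_of_le hπ, ← MeasureTheory.integral_const_mul]

noncomputable def Et (d : ℕ) (t : ℝ) : ℝ := ∫ θ in (0:ℝ)..(π/2), exp (t * sin θ) * cos θ ^ (d-1)
noncomputable def Sev (d : ℕ) (t : ℝ) : ℝ := ∑' p : ℕ, t ^ (2*p) / (2*p)! * J d (2*p)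
noncomputable def Sod (d : ℕ) (t : ℝ) : ℝ := ∑' p : ℕ, t ^ (2*p+1) / (2*p+1)! * J d (2*p+1)

lemma summable_even (d : ℕ) (t : ℝ) :
    Summable (fun p : ℕ => t ^ (2*p) / (2*p)! * J d (2*p)) :=
  (J_summable d t).comp_injective (fun a b h => by omega)

lemma summable_odd (d : ℕ) (t : ℝ) :
    Summable (fun p : ℕ => t ^ (2*p+1) / (2*p+1)! * J d (2*p+1)) :=
  (J_summable d t).comp_injective (fun a b h => by omega)

lemma Sev_add_Sod {d : ℕ} (hd : 1 ≤ d) (t : ℝ) : Sev d t + Sod d t = Et d t := by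
  rw [Et, Et_eq hd, Sev, Sod]
  exact tsum_even_add_odd (f := fun n : ℕ => t ^ n / n ! * J d n)
    (summable_even d t) (summable_odd d t)

lemma Sev_sub_Sod {d : ℕ} (hd : 1 ≤ d) (t : ℝ) : Sev d t - Sod d t = Et d (-t) := by
  rw [Et, Et_eq hd]
  have he : ∀ p : ℕ, (-t) ^ (2*p) / (2*p)! * J d (2*p) = t ^ (2*p) / (2*p)! * J d (2*p) := by
    intro p; rw [pow_mul, pow_mul, neg_sq]
  have ho : ∀ p : ℕ, (-t) ^ (2*p+1) / (2*p+1)! * J d (2*p+1)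
      = -(t ^ (2*p+1) / (2*p+1)! * J d (2*p+1)) := by
    intro p; rw [Odd.neg_pow ⟨p, by ring⟩]; ring
  have := tsum_even_add_odd (f := fun n : ℕ => (-t) ^ n / n ! * J d n)
    ((J_summable d (-t)).comp_injective (fun a b h => by omega))
    ((J_summable d (-t)).comp_injective (fun a b h => by omega))
  rw [← this, tsum_congr he, tsum_congr ho, tsum_neg]
  rw [Sev, Sod]; ring

lemma dfact_mul_dfact (n : ℕ) : n‼ * (n-1)‼ = n ! := by
  cases n with
  | zero => rfl
  | succ m => rw [Nat.succ_sub_one]; exact (Nat.factorial_eq_mul_doubleFactorial m).symm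

lemma cda_eq {d : ℕ} (hd : 1 ≤ d) (α t : ℝ) :
    cda d α t = (α * ((d‼ : ℕ) : ℝ) / ((d : ℝ) * (((d-1)‼ : ℕ) : ℝ) * J d 0)) * Sev d t
      - Sod d t := by
  have hJ0 := J_pos hd
  have hd0 : (0:ℝ) < (d : ℝ) := by exact_mod_cast hd
  have hdf : (0:ℝ) < ((d‼ : ℕ) : ℝ) := by exact_mod_cast Nat.doubleFactorial_pos d
  have hdf1 : (0:ℝ) < (((d-1)‼ : ℕ) : ℝ) := by exact_mod_cast Nat.doubleFactorial_pos (d-1)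
  have heven : ∀ p : ℕ, t ^ (2*p) / (((2*p)‼ * (2*p + d - 1)‼ : ℕ) : ℝ)
      = (1 / ((((d-1)‼ : ℕ) : ℝ) * J d 0)) * (t ^ (2*p) / (2*p)! * J d (2*p)) := by
    intro p
    have hJe := J_even hd p
    have hfac : ((2*p)! : ℝ) = (((2*p)‼ : ℕ) : ℝ) * (((2*p - 1)‼ : ℕ) : ℝ) := by
      rw [← Nat.cast_mul, dfact_mul_dfact]
    have h1 : (0:ℝ) < (((2*p)‼ : ℕ) : ℝ) := by exact_mod_cast Nat.doubleFactorial_pos _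
    have h2 : (0:ℝ) < (((2*p + d - 1)‼ : ℕ) : ℝ) := by exact_mod_cast Nat.doubleFactorial_pos _
    have h3 : (0:ℝ) < (((2*p - 1)‼ : ℕ) : ℝ) := by exact_mod_cast Nat.doubleFactorial_pos _
    rw [Nat.cast_mul, hfac]
    field_simp
    linear_combination (-(t ^ (2*p))) * hJe
  have hodd : ∀ p : ℕ, t ^ (2*p+1) / (((2*p+1)‼ * (2*p + d)‼ : ℕ) : ℝ)
      = ((d:ℝ) / ((d‼ : ℕ) : ℝ)) * (t ^ (2*p+1) / (2*p+1)! * J d (2*p+1)) := by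
    intro p
    have hJo := J_odd hd p
    have hfac : ((2*p+1)! : ℝ) = (((2*p+1)‼ : ℕ) : ℝ) * (((2*p)‼ : ℕ) : ℝ) := by
      rw [← Nat.cast_mul, ← dfact_mul_dfact (2*p+1)]
      norm_num
    have h1 : (0:ℝ) < (((2*p+1)‼ : ℕ) : ℝ) := by exact_mod_cast Nat.doubleFactorial_pos _
    have h2 : (0:ℝ) < (((2*p + d)‼ : ℕ) : ℝ) := by exact_mod_cast Nat.doubleFactorial_pos _
    have h3 : (0:ℝ) < (((2*p)‼ : ℕ) : ℝ) := by exact_mod_cast Nat.doubleFactorial_pos _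
    rw [Nat.cast_mul, hfac]
    field_simp
    linear_combination (-(t ^ (2*p+1))) * hJo
  unfold cda
  rw [tsum_congr heven, tsum_congr hodd, tsum_mul_left, tsum_mul_left, ← Sev, ← Sod]
  field_simp

lemma Et_cont (d : ℕ) (t : ℝ) : Continuous (fun θ : ℝ => exp (t * sin θ) * cos θ ^ (d-1)) := by
  fun_prop

lemma Et_nonneg (d : ℕ) (t : ℝ) : 0 ≤ Et d t := by
  apply intervalIntegral.integral_nonneg (by positivity)
  intro u hu
  have h2 : 0 ≤ cos u := cos_nonneg_of_mem_Icc ⟨by linarith [hu.1, pi_pos], hu.2⟩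
  positivity

lemma Et_neg_bound (d : ℕ) {t : ℝ} (ht : 0 ≤ t) : |Et d (-t)| ≤ π / 2 := by
  have := intervalIntegral.norm_integral_le_of_norm_le_const (C := 1)
    (f := fun θ : ℝ => exp (-t * sin θ) * cos θ ^ (d-1)) (a := 0) (b := π/2) ?_
  · simpa [Et, abs_of_nonneg pi_div_two_pos.le] using this
  · intro x hx
    rw [Set.uIoc_of_le pi_div_two_pos.le] at hx
    have hs : 0 ≤ sin x := sin_nonneg_of_nonneg_of_le_pi hx.1.le (by linarith [hx.2, pi_pos])
    have hc : |cos x| ≤ 1 := abs_cos_le_one x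
    rw [Real.norm_eq_abs, abs_mul, abs_pow]
    have he : exp (-t * sin x) ≤ 1 := by
      rw [Real.exp_le_one_iff]
      nlinarith
    calc |exp (-t * sin x)| * |cos x| ^ (d-1) ≤ 1 * 1 ^ (d-1) := by
          apply mul_le_mul
          · rw [abs_of_nonneg (exp_nonneg _)]; exact he
          · exact pow_le_pow_left₀ (abs_nonneg _) hc (d-1)
          · positivity
          · norm_num
      _ = 1 := by simp

lemma Et_lb (d : ℕ) {t : ℝ} (ht : 0 ≤ t) :
    π/6 * (1/2 : ℝ) ^ (d-1) * exp (t/2) ≤ Et d t := by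
  have hπ := pi_pos
  have h1 : (∫ θ in (π/6)..(π/3), exp (t/2) * (1/2 : ℝ) ^ (d-1))
      ≤ ∫ θ in (π/6)..(π/3), exp (t * sin θ) * cos θ ^ (d-1) := by
    apply intervalIntegral.integral_mono_on (by linarith)
      (intervalIntegrable_const) ((Et_cont d t).intervalIntegrable _ _)
    intro x hx
    have hx1 : π/6 ≤ x := hx.1
    have hx2 : x ≤ π/3 := hx.2
    have hs : 1/2 ≤ sin x := by
      rw [← Real.sin_pi_div_six]
      apply Real.strictMonoOn_sin.monotoneOn ⟨by linarith, by linarith⟩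
        ⟨by linarith, by linarith⟩ hx1
    have hc : (1/2 : ℝ) ≤ cos x := by
      rw [← Real.cos_pi_div_three]
      apply Real.strictAntiOn_cos.antitoneOn ⟨by linarith, by linarith⟩
        ⟨by linarith, by linarith⟩ hx2
    apply mul_le_mul
    · apply Real.exp_le_exp.2; nlinarith
    · apply pow_le_pow_left₀ (by norm_num) hc
    · positivity
    · positivity
  have h2 : (∫ θ in (π/6)..(π/3), exp (t * sin θ) * cos θ ^ (d-1)) ≤ Et d t := by
    apply intervalIntegral.integral_mono_interval (by linarith) (by linarith) (by linarith)
    · filter_upwards [ae_restrict_mem measurableSet_Ioc] with x hx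
      have h2 : 0 ≤ cos x := cos_nonneg_of_mem_Icc ⟨by linarith [hx.1], hx.2⟩
      positivity
    · exact (Et_cont d t).intervalIntegrable _ _
  have h3 : (∫ θ in (π/6)..(π/3), exp (t/2) * (1/2 : ℝ) ^ (d-1))
      = π/6 * (1/2 : ℝ) ^ (d-1) * exp (t/2) := by
    rw [intervalIntegral.integral_const, smul_eq_mul]
    ring
  linarith

end Stmt7Aux

theorem stmt7 (d : ℕ) (hd : 1 ≤ d) (α : ℝ) :
    (∃ M : ℝ, ∀ t : ℝ, 0 ≤ t → |cda d α t| ≤ M) ↔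
      α = (if Even d then (1 : ℝ) else Real.pi / 2) := by
  open Real Stmt7Aux in
  set αc : ℝ := if Even d then (1 : ℝ) else Real.pi / 2 with hαc_def
  have hαc : 0 < αc := by
    rw [hαc_def]; split
    · norm_num
    · positivity
  have hJ0 := J_pos hd
  have hd0 : (0:ℝ) < (d : ℝ) := by exact_mod_cast hd
  have hdf : (0:ℝ) < ((d‼ : ℕ) : ℝ) := by exact_mod_cast Nat.doubleFactorial_pos d
  have hdf1 : (0:ℝ) < (((d-1)‼ : ℕ) : ℝ) := by exact_mod_cast Nat.doubleFactorial_pos (d-1)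
  have hJz := J_zero hd
  rw [← hαc_def] at hJz
  have hA : ∀ t : ℝ, cda d α t = (α / αc) * Sev d t - Sod d t := by
    intro t
    rw [cda_eq hd α t]
    congr 2
    rw [div_eq_div_iff (by positivity) (by positivity)]
    linear_combination (-α) * hJz
  constructor
  · rintro ⟨M, hM⟩
    by_contra hne
    have hAne : α / αc ≠ 1 := by
      intro h
      exact hne ((div_eq_one_iff_eq hαc.ne').mp h)
    set δ : ℝ := |α / αc - 1| with hδ_def
    have hδ : 0 < δ := abs_pos.2 (sub_ne_zero.2 hAne)
    set K : ℝ := π/6 * (1/2 : ℝ) ^ (d-1) with hK_def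
    have hK : 0 < K := by rw [hK_def]; positivity
    set R : ℝ := max 1 ((M + π/2 + 1) * 2 / (δ * K)) with hR_def
    have hR1 : (1:ℝ) ≤ R := le_max_left _ _
    set t : ℝ := 2 * Real.log R with ht_def
    have ht : 0 ≤ t := by
      rw [ht_def]
      have := Real.log_nonneg hR1
      linarith
    have hexp : exp (t/2) = R := by
      rw [ht_def]
      rw [show (2 : ℝ) * Real.log R / 2 = Real.log R by ring]
      exact Real.exp_log (by linarith)
    have hSev2 : 2 * Sev d t = Et d t + Et d (-t) := by
      have := Sev_add_Sod hd t
      have := Sev_sub_Sod hd t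
      linarith
    have hSevlb : Et d t / 2 ≤ Sev d t := by
      have := Et_nonneg d (-t)
      linarith
    have hSev0 : 0 ≤ Sev d t := by
      have := Et_nonneg d t
      have := Et_nonneg d (-t)
      linarith
    have hcda : cda d α t = Et d (-t) + (α/αc - 1) * Sev d t := by
      rw [hA t, ← Sev_sub_Sod hd t]
      ring
    have hEtlb := Et_lb d ht
    rw [hexp] at hEtlb
    have hRge : (M + π/2 + 1) * 2 / (δ * K) ≤ R := le_max_right _ _
    have hKR : (M + π/2 + 1) * 2 ≤ δ * K * R := by
      rw [div_le_iff₀ (by positivity)] at hRge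
      linarith [hRge]
    have hub := hM t ht
    have hEtnb := Et_neg_bound d ht
    have habs : δ * Sev d t - |Et d (-t)| ≤ |cda d α t| := by
      rw [hcda]
      have h1 : |(α/αc - 1) * Sev d t| = δ * Sev d t := by
        rw [abs_mul, abs_of_nonneg hSev0]
      have h2 : |(α/αc - 1) * Sev d t| ≤ |Et d (-t) + (α/αc - 1) * Sev d t| + |Et d (-t)| := by
        calc |(α/αc - 1) * Sev d t|
            = |(Et d (-t) + (α/αc - 1) * Sev d t) - Et d (-t)| := by ring_nf
          _ ≤ |Et d (-t) + (α/αc - 1) * Sev d t| + |Et d (-t)| := abs_sub _ _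
      linarith
    have hfinal : δ * (K * R) / 2 - π/2 ≤ M := by
      have hδSev : δ * (K * R) / 2 ≤ δ * Sev d t := by
        have : K * R ≤ Et d t := hEtlb
        have h5 : Et d t / 2 ≤ Sev d t := hSevlb
        nlinarith
      linarith
    nlinarith [hKR]
  · intro hα
    refine ⟨π/2, fun t ht => ?_⟩
    have hA1 : α / αc = 1 := by
      rw [hα, div_self hαc.ne']
    rw [hA t, hA1, one_mul, Sev_sub_Sod hd t]
    exact Et_neg_bound d ht
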